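/- Let C be a monoidal category and a, b, m, x objects of C. Consider the quotient of the sigma type Σ (n : C), (a ⟶ n ⊗ x) × (n ⟶ b ⊗ m) by the equivalence relation generated by: for every f : n' ⟶ n, p : a ⟶ n' ⊗ x and q : n ⟶ b ⊗ m, the triple (n, p ≫ (f ⊗ 𝟙 x), q) is related to (n', p, f ≫ q). Then the map sending the class of (n, p, q) to p ≫ (q ⊗ 𝟙 x) is a well-defined bijection onto the hom-set (a ⟶ (b ⊗ m) ⊗ x), with inverse sending h : a ⟶ (b ⊗ m) ⊗ x to the class of (b ⊗ m, h, 𝟙 (b ⊗ m)). (Pointwise, this is the isomorphism of profunctors R_x ⊗ R_m ≅ R_{m ⊗ x}.) -/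

import Mathlib

open CategoryTheory MonoidalCategory

variable {C : Type*} [Category C] [MonoidalCategory C]

/-- Representatives of the profunctor composite `(R_x ⊗ R_m)(a, b)`. -/
def RCompRep (a b m x : C) : Type _ :=
  Σ n : C, (a ⟶ n ⊗ x) × (n ⟶ b ⊗ m)

/-- The coend relation: for `f : n' ⟶ n`, `p : a ⟶ n' ⊗ x`, `q : n ⟶ b ⊗ m`,
`(n, p ≫ (f ⊗ 𝟙 x), q)` is related to `(n', p, f ≫ q)`. -/
def RCompRel (a b m x : C) : RCompRep a b m x → RCompRep a b m x → Prop :=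
  fun A B => ∃ f : B.1 ⟶ A.1,
    A.2.1 = B.2.1 ≫ (f ⊗ₘ 𝟙 x) ∧ B.2.2 = f ≫ A.2.2

/-- Pointwise, the isomorphism of profunctors `R_x ⊗ R_m ≅ R_{m ⊗ x}`:
the class of `(n, p, q)` is sent to `p ≫ (q ⊗ 𝟙 x) : a ⟶ (b ⊗ m) ⊗ x`, a well-defined
bijection with inverse `h ↦ class of (b ⊗ m, h, 𝟙 (b ⊗ m))`. -/
theorem R_comp_iso (a b m x : C) :
    ∃ g : Quot (RCompRel a b m x) → (a ⟶ (b ⊗ m) ⊗ x),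
      (∀ (n : C) (p : a ⟶ n ⊗ x) (q : n ⟶ b ⊗ m),
        g (Quot.mk (RCompRel a b m x) ⟨n, p, q⟩) = p ≫ (q ⊗ₘ 𝟙 x)) ∧
      Function.LeftInverse
        (fun h : a ⟶ (b ⊗ m) ⊗ x => Quot.mk (RCompRel a b m x) ⟨b ⊗ m, h, 𝟙 (b ⊗ m)⟩) g ∧
      Function.RightInverse
        (fun h : a ⟶ (b ⊗ m) ⊗ x => Quot.mk (RCompRel a b m x) ⟨b ⊗ m, h, 𝟙 (b ⊗ m)⟩) g := by
  refine ⟨Quot.lift (fun A => A.2.1 ≫ (A.2.2 ⊗ₘ 𝟙 x)) ?_, fun n p q => rfl, ?_, ?_⟩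
  · rintro A B ⟨f, h1, h2⟩
    simp [h1, h2, MonoidalCategory.comp_tensor_id]
  · intro z
    induction z using Quot.ind with
    | _ A =>
      obtain ⟨n, p, q⟩ := A
      exact Quot.sound ⟨q, rfl, (Category.comp_id q).symm⟩
  · intro h
    simp
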